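/- Fix C ≥ 1. For every t > 0 such that F(Ct) ≥ j₀, one has F(t) ≤ 4 C^{1/ν*} F(Ct). -/

import Mathlib

/-- `F μ t` is the number of indices `j ≥ 1` with `μ j ≥ t`. -/
noncomputable def F (μ : ℕ → ℝ) (t : ℝ) : ℕ :=
  {j : ℕ | 1 ≤ j ∧ t ≤ μ j}.ncard

/-- under (eigup), for `C ≥ 1` and every `t > 0` with `F(Ct) ≥ j₀`,
one has `F(t) ≤ 4 C^(1/ν*) F(Ct)`. -/
theorem stmt1 (μ : ℕ → ℝ)
    (hpos : ∀ j, 1 ≤ j → 0 < μ j)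
    (hanti : ∀ j, 1 ≤ j → μ (j + 1) ≤ μ j)
    (hlim : Filter.Tendsto μ Filter.atTop (nhds 0))
    (ν : ℝ) (hν : 1 ≤ ν) (j₀ : ℕ) (hj₀ : 1 ≤ j₀)
    (heigup : ∀ j, 1 ≤ j → j₀ ≤ j → μ (2 * j) ≤ (2 : ℝ) ^ (-ν) * μ j)
    (C : ℝ) (hC : 1 ≤ C) (t : ℝ) (ht : 0 < t) (hF : j₀ ≤ F μ (C * t)) :
    (F μ t : ℝ) ≤ 4 * C ^ (1 / ν) * (F μ (C * t) : ℝ) := by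
  have hν0 : (0:ℝ) < ν := lt_of_lt_of_le one_pos hν
  have hC0 : (0:ℝ) < C := lt_of_lt_of_le one_pos hC
  -- monotonicity
  have hmono : ∀ i j : ℕ, 1 ≤ i → i ≤ j → μ j ≤ μ i := by
    intro i j h1 hij
    induction j, hij using Nat.le_induction with
    | base => exact le_rfl
    | succ j hij ih => exact le_trans (hanti j (le_trans h1 hij)) ih
  set m := F μ (C * t) with hm
  have hm1 : 1 ≤ m := le_trans hj₀ hF
  -- finiteness of the set defining F μ (C*t)
  have hCt : 0 < C * t := by positivity
  have hev : ∀ᶠ j in Filter.atTop, μ j < C * t :=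
    hlim.eventually (gt_mem_nhds hCt)
  obtain ⟨N₀, hN₀⟩ := Filter.eventually_atTop.mp hev
  have hsub : {j : ℕ | 1 ≤ j ∧ C * t ≤ μ j} ⊆ ↑(Finset.Ico 1 (max N₀ 1)) := by
    intro j hj
    simp only [Finset.coe_Ico, Set.mem_Ico]
    refine ⟨hj.1, ?_⟩
    by_contra h
    push_neg at h
    have : μ j < C * t := hN₀ j (le_trans (le_max_left _ _) h)
    exact absurd hj.2 (not_le.mpr this)
  have hfin : {j : ℕ | 1 ≤ j ∧ C * t ≤ μ j}.Finite :=
    Set.Finite.subset (Finset.finite_toSet _) hsub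
  -- μ (m+1) < C * t
  have hmu_m1 : μ (m + 1) < C * t := by
    by_contra h
    push_neg at h
    have hIcc : (↑(Finset.Icc 1 (m+1)) : Set ℕ) ⊆ {j : ℕ | 1 ≤ j ∧ C * t ≤ μ j} := by
      intro i hi
      simp only [Finset.coe_Icc, Set.mem_Icc] at hi
      exact ⟨hi.1, le_trans h (hmono i (m+1) hi.1 hi.2)⟩
    have := Set.ncard_le_ncard hIcc hfin
    rw [Set.ncard_coe_finset, Nat.card_Icc] at this
    simp only [Nat.add_sub_cancel] at this
    have hdef : {j : ℕ | 1 ≤ j ∧ C * t ≤ μ j}.ncard = m := rfl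
    rw [hdef] at this
    omega
  set n := m + 1 with hn
  have hn1 : 1 ≤ n := by omega
  have hnj0 : j₀ ≤ n := by omega
  -- iterated halving
  have hiter : ∀ k : ℕ, μ (2 ^ k * n) ≤ (2:ℝ) ^ (-(k:ℝ) * ν) * μ n := by
    intro k
    induction k with
    | zero => simp
    | succ k ih =>
      have hkn1 : 1 ≤ 2 ^ k * n := Nat.one_le_iff_ne_zero.mpr (by positivity)
      have hknj : j₀ ≤ 2 ^ k * n :=
        le_trans hnj0 (Nat.le_mul_of_pos_left n (by positivity))
      have h1 : 2 ^ (k+1) * n = 2 * (2 ^ k * n) := by ring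
      calc μ (2 ^ (k+1) * n) = μ (2 * (2 ^ k * n)) := by rw [h1]
        _ ≤ (2:ℝ) ^ (-ν) * μ (2 ^ k * n) := heigup _ hkn1 hknj
        _ ≤ (2:ℝ) ^ (-ν) * ((2:ℝ) ^ (-(k:ℝ) * ν) * μ n) := by
            exact mul_le_mul_of_nonneg_left ih (Real.rpow_nonneg (by norm_num) _)
        _ = (2:ℝ) ^ (-(((k+1:ℕ)):ℝ) * ν) * μ n := by
            have hexp : (-((k+1:ℕ)):ℝ) * ν = -ν + -(k:ℝ) * ν := by push_cast; ring
            rw [hexp, Real.rpow_add (by norm_num : (0:ℝ) < 2)]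
            ring
  set x := Real.logb 2 C / ν with hx
  have hx0 : 0 ≤ x := div_nonneg (Real.logb_nonneg one_lt_two hC) hν0.le
  set k := ⌈x⌉₊ with hk
  have hkx : x ≤ (k:ℝ) := Nat.le_ceil x
  have hlogb : Real.logb 2 C ≤ (k:ℝ) * ν := by
    have : Real.logb 2 C = x * ν := (div_mul_cancel₀ _ hν0.ne').symm
    rw [this]
    exact mul_le_mul_of_nonneg_right hkx hν0.le
  have hCle : C ≤ (2:ℝ) ^ ((k:ℝ) * ν) := by
    calc C = (2:ℝ) ^ Real.logb 2 C := (Real.rpow_logb (by norm_num) (by norm_num) hC0).symm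
      _ ≤ (2:ℝ) ^ ((k:ℝ) * ν) := Real.rpow_le_rpow_of_exponent_le one_le_two hlogb
  -- μ (2^k * n) < t
  have hμkn : μ (2 ^ k * n) < t := by
    have h2 : μ (2 ^ k * n) < (2:ℝ) ^ (-(k:ℝ) * ν) * (C * t) := by
      refine lt_of_le_of_lt (hiter k) ?_
      exact mul_lt_mul_of_pos_left hmu_m1 (Real.rpow_pos_of_pos (by norm_num) _)
    refine lt_of_lt_of_le h2 ?_
    rw [neg_mul, Real.rpow_neg (by norm_num : (0:ℝ) ≤ 2),
      inv_mul_le_iff₀ (Real.rpow_pos_of_pos (by norm_num) _)]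
    exact mul_le_mul_of_nonneg_right hCle ht.le
  -- F μ t ≤ 2^k * n
  have hFt : F μ t ≤ 2 ^ k * n := by
    have hsub2 : {j : ℕ | 1 ≤ j ∧ t ≤ μ j} ⊆ ↑(Finset.Ico 1 (2 ^ k * n)) := by
      intro j hj
      simp only [Finset.coe_Ico, Set.mem_Ico]
      refine ⟨hj.1, ?_⟩
      by_contra h
      push_neg at h
      have : μ j < t := lt_of_le_of_lt (hmono _ j (Nat.one_le_iff_ne_zero.mpr (by positivity)) h) hμkn
      exact absurd hj.2 (not_le.mpr this)
    have := Set.ncard_le_ncard hsub2 (Finset.finite_toSet _)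
    rw [Set.ncard_coe_finset, Nat.card_Ico] at this
    exact le_trans this (Nat.sub_le _ _)
  -- 2^k ≤ 2 * C^(1/ν)
  have h2x : (2:ℝ) ^ x = C ^ (1/ν) := by
    rw [hx, div_eq_mul_inv, Real.rpow_mul (by norm_num : (0:ℝ) ≤ 2),
      Real.rpow_logb (by norm_num) (by norm_num) hC0, one_div]
  have hklt : (k:ℝ) < x + 1 := Nat.ceil_lt_add_one hx0
  have h2k : (2:ℝ) ^ (k:ℕ) ≤ 2 * C ^ (1/ν) := by
    calc (2:ℝ) ^ (k:ℕ) = (2:ℝ) ^ ((k:ℕ):ℝ) := (Real.rpow_natCast 2 k).symm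
      _ ≤ (2:ℝ) ^ (x + 1) := Real.rpow_le_rpow_of_exponent_le one_le_two hklt.le
      _ = (2:ℝ) ^ x * 2 := by rw [Real.rpow_add (by norm_num : (0:ℝ) < 2), Real.rpow_one]
      _ = 2 * C ^ (1/ν) := by rw [h2x]; ring
  -- conclude
  have hCν0 : (0:ℝ) < C ^ (1/ν) := Real.rpow_pos_of_pos hC0 _
  have hcast : (F μ t : ℝ) ≤ (2:ℝ) ^ (k:ℕ) * ((m:ℝ) + 1) := by
    have h : ((F μ t : ℕ) : ℝ) ≤ ((2 ^ k * n : ℕ) : ℝ) := by exact_mod_cast hFt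
    push_cast at h ⊢
    have hn' : (n:ℝ) = (m:ℝ) + 1 := by rw [hn, Nat.cast_add, Nat.cast_one]
    rw [hn'] at h
    linarith
  have hmR : (1:ℝ) ≤ (m:ℝ) := by exact_mod_cast hm1
  nlinarith [mul_le_mul_of_nonneg_right h2k (by linarith : (0:ℝ) ≤ (m:ℝ) + 1),
    mul_pos hCν0 (by linarith : (0:ℝ) < (m:ℝ))]
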